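/- The member state choice rule Ĉ_m is the unique choice rule satisfying feasibility, early filling, and respect of member state priorities: any choice rule C_m (a function from sets of contracts to subsets of those contracts at member state m) satisfying all three properties equals Ĉ_m on every input. -/

import Mathlib

/-- A contract at a fixed member state: `(asylum seeker, wait time)`.
Asylum seekers are labelled by naturals; `π a` is the priority rank of `a`
(smaller rank = higher priority); wait times are naturals. -/
abbrev Ctr := ℕ × ℕ

open Classical in
/-- Pick, from a nonempty set of contracts, the lowest-wait-time contract of the
highest-priority asylum seeker (lexicographic minimum of (rank, wait, agent)). -/
noncomputable def pick (π : ℕ → ℕ) (Z : Finset Ctr) (h : Z.Nonempty) : Ctr :=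
  let k := (Z.image fun x => toLex ((π x.1 : ℕ), toLex (x.2, x.1))).min'
    (h.image _)
  ((ofLex (ofLex k).2).2, (ofLex (ofLex k).2).1)

open Classical in
/-- One run of the greedy algorithm with fuel.  `excl = true` excludes all
contracts of already accepted asylum seekers (the rule `Ĉ_m`), `excl = false`
excludes only already accepted contracts (the completion `Ĉ'_m`). -/
noncomputable def run (s : ℕ → ℕ) (q : ℕ) (r π : ℕ → ℕ) (excl : Bool)
    (X' : Finset Ctr) : ℕ → Finset Ctr → Finset Ctr
  | 0, acc => acc
  | n+1, acc =>
    let Z : Finset Ctr := X'.filter fun x =>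
      (acc.filter fun y => y.2 = x.2).card < r x.2 ∧
      (excl = true → ∀ y ∈ acc, y.1 ≠ x.1) ∧
      (excl = false → x ∉ acc)
    if q ≤ acc.sum (fun x => s x.1) then acc
    else if h : Z.Nonempty then
      run s q r π excl X' n (insert (pick π Z h) acc)
    else acc

/-- The member state choice rule `Ĉ_m`. -/
noncomputable def Chat (s : ℕ → ℕ) (q : ℕ) (r π : ℕ → ℕ)
    (X' : Finset Ctr) : Finset Ctr :=
  run s q r π true X' (X'.card + 1) ∅

/-- The completion `Ĉ'_m` of the member state choice rule. -/
noncomputable def Chat' (s : ℕ → ℕ) (q : ℕ) (r π : ℕ → ℕ)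
    (X' : Finset Ctr) : Finset Ctr :=
  run s q r π false X' (X'.card + 1) ∅

open Finset in
lemma pick_spec (π : ℕ → ℕ) (Z : Finset Ctr) (h : Z.Nonempty) :
    pick π Z h ∈ Z ∧ ∀ z ∈ Z,
      toLex ((π (pick π Z h).1 : ℕ), toLex ((pick π Z h).2, (pick π Z h).1)) ≤
        toLex ((π z.1 : ℕ), toLex (z.2, z.1)) := by
  have hmem := Finset.min'_mem
    (Z.image fun x => toLex ((π x.1 : ℕ), toLex (x.2, x.1))) (h.image _)
  rw [Finset.mem_image] at hmem
  obtain ⟨x, hx, hxk⟩ := hmem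
  have hpick : pick π Z h = x := by
    simp only [pick, ← hxk, ofLex_toLex]
  refine ⟨hpick ▸ hx, fun z hz => ?_⟩
  rw [hpick, hxk]
  exact Finset.min'_le _ _ (Finset.mem_image_of_mem _ hz)

open Finset in
lemma run_eq (s : ℕ → ℕ) (q : ℕ) (r π : ℕ → ℕ)
    (hπ : Function.Injective π) (C : Finset Ctr → Finset Ctr)
    (hsub : ∀ X' : Finset Ctr, C X' ⊆ X')
    (hfeas : ∀ X' : Finset Ctr,
      (∀ a : ℕ, ((C X').filter fun x => x.1 = a).card ≤ 1) ∧
      (∀ w : ℕ, ((C X').filter fun x => x.2 = w).card ≤ r w))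
    (hearly : ∀ X' : Finset Ctr, ∀ x ∈ C X', ∀ x' ∈ X',
      x'.1 = x.1 → x'.2 < x.2 → x' ∉ C X' →
      ¬ ((C X').filter fun y => y.2 = x'.2 ∧ π y.1 < π x.1).card < r x'.2)
    (hresp : ∀ (X' : Finset Ctr) (a : ℕ), (∃ x ∈ X', x.1 = a) →
      ((∃ x ∈ C X', x.1 = a) ↔
        (((C X').filter fun y => π y.1 < π a).sum fun y => s y.1) < q ∧
        ∃ w : ℕ, (a, w) ∈ X' ∧
          ((C X').filter fun y => y.2 = w ∧ π y.1 < π a).card < r w))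
    (X' : Finset Ctr) :
    ∀ n (acc : Finset Ctr), acc ⊆ C X' →
      (∀ z ∈ X', ((acc.filter fun y => y.2 = z.2).card < r z.2) →
        (∀ y ∈ acc, y.1 ≠ z.1) → ∀ x ∈ acc, π x.1 < π z.1) →
      (C X').card ≤ acc.card + n →
      run s q r π true X' n acc = C X' := by
  have huniq : ∀ x ∈ C X', ∀ y ∈ C X', x.1 = y.1 → x = y := by
    intro x hx y hy hxy
    exact Finset.card_le_one.mp ((hfeas X').1 x.1) x
      (mem_filter.mpr ⟨hx, rfl⟩) y (mem_filter.mpr ⟨hy, hxy.symm⟩)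
  intro n
  induction n with
  | zero =>
    intro acc h1 _ h3
    exact (Finset.eq_of_subset_of_card_le h1 h3).symm ▸ rfl
  | succ n ih =>
    intro acc h1 hinv h3
    have hDZ : ∀ y ∈ C X', y ∉ acc →
        y ∈ X' ∧ (acc.filter fun z => z.2 = y.2).card < r y.2 ∧
        ∀ z ∈ acc, z.1 ≠ y.1 := by
      intro y hy hy'
      refine ⟨hsub X' hy, ?_, ?_⟩
      · have hss : (acc.filter fun z => z.2 = y.2) ⊂
            ((C X').filter fun z => z.2 = y.2) :=
          (Finset.ssubset_iff_of_subset (filter_subset_filter _ h1)).mpr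
            ⟨y, mem_filter.mpr ⟨hy, rfl⟩, fun hc => hy' (mem_filter.mp hc).1⟩
        exact lt_of_lt_of_le (card_lt_card hss) ((hfeas X').2 y.2)
      · intro z hz hzy
        exact hy' (huniq z (h1 hz) y hy hzy ▸ hz)
    rw [run]
    by_cases hq : q ≤ acc.sum (fun x => s x.1)
    · rw [if_pos hq]
      refine Finset.Subset.antisymm h1 fun y hy => ?_
      by_contra hy'
      obtain ⟨hyX, hycap, hyag⟩ := hDZ y hy hy'
      have hrank := hinv y hyX hycap hyag
      have hq' := ((hresp X' y.1 ⟨y, hyX, rfl⟩).mp ⟨y, hy, rfl⟩).1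
      have hle : acc.sum (fun x => s x.1) ≤
          (((C X').filter fun z => π z.1 < π y.1)).sum (fun x => s x.1) :=
        Finset.sum_le_sum_of_subset
          (fun x hx => mem_filter.mpr ⟨h1 hx, hrank x hx⟩)
      omega
    · rw [if_neg hq]
      set ZS : Finset Ctr := X'.filter fun x =>
        (acc.filter fun y => y.2 = x.2).card < r x.2 ∧
        ((true : Bool) = true → ∀ y ∈ acc, y.1 ≠ x.1) ∧
        ((true : Bool) = false → x ∉ acc) with hZSdef
      have hmemZ : ∀ y ∈ C X', y ∉ acc → y ∈ ZS := by
        intro y hy hy'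
        obtain ⟨hyX, hycap, hyag⟩ := hDZ y hy hy'
        exact mem_filter.mpr ⟨hyX, hycap, fun _ => hyag,
          fun h => absurd h (by decide)⟩
      by_cases hZ : ZS.Nonempty
      · rw [dif_pos hZ]
        obtain ⟨hpZ, hpmin⟩ := pick_spec π ZS hZ
        set p := pick π ZS hZ with hpdef
        obtain ⟨hpX, hpcap, hpag', -⟩ := mem_filter.mp hpZ
        have hpag : ∀ y ∈ acc, y.1 ≠ p.1 := hpag' rfl
        have hrankacc : ∀ x ∈ acc, π x.1 < π p.1 := hinv p hpX hpcap hpag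
        have E1 : (C X').filter (fun y => π y.1 < π p.1) = acc := by
          apply Finset.Subset.antisymm
          · intro y hy
            obtain ⟨hyD, hylt⟩ := mem_filter.mp hy
            by_contra hy'
            have hk := hpmin y (hmemZ y hyD hy')
            rcases Prod.Lex.le_iff.mp hk with h | ⟨h, -⟩ <;>
              simp at h <;> omega
          · intro x hx
            exact mem_filter.mpr ⟨h1 hx, hrankacc x hx⟩
        have E2 : (C X').filter (fun y => y.2 = p.2 ∧ π y.1 < π p.1) =
            acc.filter (fun y => y.2 = p.2) := by
          ext y
          simp only [mem_filter]
          constructor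
          · rintro ⟨hyD, hyw, hylt⟩
            have : y ∈ acc := E1 ▸ mem_filter.mpr ⟨hyD, hylt⟩
            exact ⟨this, hyw⟩
          · rintro ⟨hya, hyw⟩
            exact ⟨h1 hya, hyw, hrankacc y hya⟩
        have hpD : p ∈ C X' := by
          by_contra hpD
          obtain ⟨x, hxD, hx1⟩ := (hresp X' p.1 ⟨p, hpX, rfl⟩).mpr
            ⟨by rw [E1]; omega,
             p.2, by rwa [Prod.mk.eta], by rw [E2]; exact hpcap⟩
          have hxp : x ≠ p := fun h => hpD (h ▸ hxD)
          have hxacc : x ∉ acc := fun h => hpag x h hx1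
          have hk := hpmin x (hmemZ x hxD hxacc)
          have hsnd : toLex (p.2, p.1) ≤ toLex (x.2, x.1) := by
            rcases Prod.Lex.le_iff.mp hk with h | ⟨-, h⟩
            · rw [hx1, ofLex_toLex, ofLex_toLex] at h; omega
            · exact h
          have hw : p.2 < x.2 := by
            rcases Prod.Lex.le_iff.mp hsnd with h | ⟨h, -⟩
            · exact h
            · exact absurd (Prod.ext hx1 h.symm) hxp
          have := hearly X' x hxD p hpX hx1.symm hw hpD
          rw [hx1, E2] at this
          exact this hpcap
        have hpacc : p ∉ acc := fun h => hpag p h rfl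
        refine ih (insert p acc) (insert_subset hpD h1) ?_ ?_
        · intro z hzX hzcap hzag x hx
          have hzcap' : (acc.filter fun y => y.2 = z.2).card < r z.2 :=
            lt_of_le_of_lt
              (card_le_card (filter_subset_filter _ (subset_insert _ _))) hzcap
          have hzag' : ∀ y ∈ acc, y.1 ≠ z.1 :=
            fun y hy => hzag y (mem_insert_of_mem hy)
          rcases mem_insert.mp hx with rfl | hx
          · have hzZ : z ∈ ZS := mem_filter.mpr
              ⟨hzX, hzcap', fun _ => hzag', fun h => absurd h (by decide)⟩
            have hle : π p.1 ≤ π z.1 := by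
              rcases Prod.Lex.le_iff.mp (hpmin z hzZ) with h | ⟨h, -⟩ <;>
                simp at h <;> omega
            exact lt_of_le_of_ne hle
              (fun h => hzag p (mem_insert_self _ _) (hπ h))
          · exact hinv z hzX hzcap' hzag' x hx
        · rw [card_insert_of_notMem hpacc]; omega
      · rw [dif_neg hZ]
        refine Finset.Subset.antisymm h1 fun y hy => ?_
        by_contra hy'
        exact hZ ⟨y, hmemZ y hy hy'⟩

/-- Theorem 1, uniqueness: any choice rule satisfying
feasibility, early filling, and respect of member state priorities coincides
with `Ĉ_m` on every input. -/
theorem chat_unique (s : ℕ → ℕ) (q : ℕ) (r π : ℕ → ℕ)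
    (hπ : Function.Injective π) (C : Finset Ctr → Finset Ctr)
    (hsub : ∀ X' : Finset Ctr, C X' ⊆ X')
    (hfeas : ∀ X' : Finset Ctr,
      (∀ a : ℕ, ((C X').filter fun x => x.1 = a).card ≤ 1) ∧
      (∀ w : ℕ, ((C X').filter fun x => x.2 = w).card ≤ r w))
    (hearly : ∀ X' : Finset Ctr, ∀ x ∈ C X', ∀ x' ∈ X',
      x'.1 = x.1 → x'.2 < x.2 → x' ∉ C X' →
      ¬ ((C X').filter fun y => y.2 = x'.2 ∧ π y.1 < π x.1).card < r x'.2)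
    (hresp : ∀ (X' : Finset Ctr) (a : ℕ), (∃ x ∈ X', x.1 = a) →
      ((∃ x ∈ C X', x.1 = a) ↔
        (((C X').filter fun y => π y.1 < π a).sum fun y => s y.1) < q ∧
        ∃ w : ℕ, (a, w) ∈ X' ∧
          ((C X').filter fun y => y.2 = w ∧ π y.1 < π a).card < r w)) :
    ∀ X' : Finset Ctr, C X' = Chat s q r π X' := by
  intro X'
  exact (run_eq s q r π hπ C hsub hfeas hearly hresp X' (X'.card + 1) ∅
    (Finset.empty_subset _) (by simp)
    (by simpa using Nat.le_succ_of_le (Finset.card_le_card (hsub X')))).symm
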